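/- The scheme associated to the Möbius–Kantor configuration is Spec ℚ[z]/(z² − z + 1); in particular the polynomial z² − z + 1 has no rational roots but has roots in ℚ(√−3), so the Möbius–Kantor configuration has no strong realization over ℚ (and none over ℝ) but its defining polynomial system has solutions over ℚ(√−3). -/
import Mathlib

/-- The determinant of three vectors in `k³`. -/
def det3 {k : Type*} [Field k] (a b c : Fin 3 → k) : k :=
  Matrix.det (Matrix.of ![a, b, c])

/-- The columns of the matrix parametrizing weak realizations of the Möbius–Kantor
configuration with the first five points in standard position. -/
def mkVecs {k : Type*} [Field k] (y1 y2 y3 z1 z2 z3 : k) : Fin 8 → Fin 3 → k :=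
  ![![0, 1, 1], ![0, 0, 1], ![0, 1, 0], ![1, 1, 1], ![1, 0, 0],
    ![1, y1, z1], ![1, y2, z2], ![1, y3, z3]]

/-- The system of determinant equations for the Möbius–Kantor configuration
(lines {1,2,3}, {1,4,5}, {5,6,7}, {1,7,8}, {3,5,8}, {2,6,8}, {3,4,6}, {2,4,7},
shifted to 0-indexing). -/
def mkSystem {k : Type*} [Field k] (y1 y2 y3 z1 z2 z3 : k) : Prop :=
  det3 (mkVecs y1 y2 y3 z1 z2 z3 0) (mkVecs y1 y2 y3 z1 z2 z3 1) (mkVecs y1 y2 y3 z1 z2 z3 2) = 0 ∧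
  det3 (mkVecs y1 y2 y3 z1 z2 z3 0) (mkVecs y1 y2 y3 z1 z2 z3 3) (mkVecs y1 y2 y3 z1 z2 z3 4) = 0 ∧
  det3 (mkVecs y1 y2 y3 z1 z2 z3 4) (mkVecs y1 y2 y3 z1 z2 z3 5) (mkVecs y1 y2 y3 z1 z2 z3 6) = 0 ∧
  det3 (mkVecs y1 y2 y3 z1 z2 z3 0) (mkVecs y1 y2 y3 z1 z2 z3 6) (mkVecs y1 y2 y3 z1 z2 z3 7) = 0 ∧
  det3 (mkVecs y1 y2 y3 z1 z2 z3 2) (mkVecs y1 y2 y3 z1 z2 z3 4) (mkVecs y1 y2 y3 z1 z2 z3 7) = 0 ∧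
  det3 (mkVecs y1 y2 y3 z1 z2 z3 1) (mkVecs y1 y2 y3 z1 z2 z3 5) (mkVecs y1 y2 y3 z1 z2 z3 7) = 0 ∧
  det3 (mkVecs y1 y2 y3 z1 z2 z3 2) (mkVecs y1 y2 y3 z1 z2 z3 3) (mkVecs y1 y2 y3 z1 z2 z3 5) = 0 ∧
  det3 (mkVecs y1 y2 y3 z1 z2 z3 1) (mkVecs y1 y2 y3 z1 z2 z3 3) (mkVecs y1 y2 y3 z1 z2 z3 6) = 0

lemma mkSystem_explicit {k : Type*} [Field k] (y1 y2 y3 z1 z2 z3 : k) :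
    mkSystem y1 y2 y3 z1 z2 z3 ↔
      (y1 * z2 - y2 * z1 = 0 ∧ z2 - z3 + y3 - y2 = 0 ∧ z3 = 0 ∧ y3 = y1 ∧
        z1 = 1 ∧ y2 = 1) := by
  show (det3 ![0,1,1] ![0,0,1] ![0,1,0] = 0 ∧
    det3 ![0,1,1] ![1,1,1] ![1,0,0] = 0 ∧
    det3 ![1,0,0] ![1,y1,z1] ![1,y2,z2] = 0 ∧
    det3 ![0,1,1] ![1,y2,z2] ![1,y3,z3] = 0 ∧
    det3 ![0,1,0] ![1,0,0] ![1,y3,z3] = 0 ∧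
    det3 ![0,0,1] ![1,y1,z1] ![1,y3,z3] = 0 ∧
    det3 ![0,1,0] ![1,1,1] ![1,y1,z1] = 0 ∧
    det3 ![0,0,1] ![1,1,1] ![1,y2,z2] = 0) ↔ _
  simp only [det3, Matrix.det_fin_three, Matrix.of_apply, Matrix.cons_val', Matrix.cons_val_zero,
    Matrix.cons_val_one, Matrix.head_cons, Matrix.cons_val_two, Matrix.tail_cons,
    Matrix.empty_val', Matrix.cons_val_fin_one, Matrix.head_fin_const]
  constructor
  · rintro ⟨-, -, h3, h4, h5, h6, h7, h8⟩
    refine ⟨by linear_combination h3, by linear_combination h4, by linear_combination -h5,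
      by linear_combination h6, by linear_combination -h7, by linear_combination h8⟩
  · rintro ⟨h3, h4, h5, h6, h7, h8⟩
    refine ⟨by ring, by ring, by linear_combination h3, by linear_combination h4,
      by linear_combination -h5, by linear_combination h6, by linear_combination -h7,
      by linear_combination h8⟩

/-- The Möbius–Kantor system is solvable over a field `k` iff `z² − z + 1` has a root
in `k`; the polynomial has no root in ℚ or ℝ, but has a root in ℚ(√−3) ⊆ ℂ. -/
theorem mobius_kantor {k : Type*} [Field k] :
    ((∃ y1 y2 y3 z1 z2 z3 : k, mkSystem y1 y2 y3 z1 z2 z3) ↔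
      ∃ z : k, z ^ 2 - z + 1 = 0) ∧
    (¬ ∃ q : ℚ, q ^ 2 - q + 1 = 0) ∧
    (¬ ∃ r : ℝ, r ^ 2 - r + 1 = 0) ∧
    (∃ z : ℂ, z ^ 2 - z + 1 = 0 ∧
      ∃ a b : ℚ, z = (a : ℂ) + (b : ℂ) * (Real.sqrt 3 : ℝ) * Complex.I) := by
  refine ⟨⟨?_, ?_⟩, ?_, ?_, ?_⟩
  · rintro ⟨y1, y2, y3, z1, z2, z3, h⟩
    rw [mkSystem_explicit] at h
    obtain ⟨h3, h4, h5, h6, h7, h8⟩ := h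
    subst h5 h6 h7 h8
    exact ⟨z2, by linear_combination -h3 + z2 * h4⟩
  · rintro ⟨z, hz⟩
    refine ⟨1 - z, 1, 1 - z, 1, z, 0, ?_⟩
    rw [mkSystem_explicit]
    exact ⟨by linear_combination -hz, by ring, rfl, rfl, rfl, rfl⟩
  · rintro ⟨q, hq⟩
    nlinarith [sq_nonneg (2 * q - 1)]
  · rintro ⟨r, hr⟩
    nlinarith [sq_nonneg (2 * r - 1)]
  · refine ⟨(1:ℂ)/2 + (1/2 : ℂ) * (Real.sqrt 3 : ℝ) * Complex.I, ?_, 1/2, 1/2, by push_cast; ring⟩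
    have h3 : ((Real.sqrt 3 : ℝ) : ℂ) ^ 2 = 3 := by
      norm_cast
      rw [Real.sq_sqrt] ; norm_num
    have hI : (Complex.I) ^ 2 = -1 := Complex.I_sq
    linear_combination (Complex.I ^ 2 / 4) * h3 + (3/4 : ℂ) * hI
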